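/- For every integer k ≥ 2, the sum of the absolute values of the coefficients of P_k equals (2k−3)!! = 1·3·5···(2k−3). -/

import Mathlib

noncomputable section

open Polynomial

/-- The polynomials `P_k` defined by `P₁ = 1` and
`P_{k+1}(X) = (1-2k)·X·P_k(X) + (1+X²)·P_k'(X)` for `k ≥ 1`. -/
def P : ℕ → Polynomial ℝ
  | 0 => 0
  | 1 => 1
  | (k + 2) => C (1 - 2 * ((k : ℝ) + 1)) * X * P (k + 1)
      + (1 + X ^ 2) * derivative (P (k + 1))

def Q : ℕ → Polynomial ℝ
  | 0 => 0
  | 1 => 1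
  | (k + 2) => C (2 * ((k : ℝ) + 1) - 1) * X * Q (k + 1)
      + (1 - X ^ 2) * derivative (Q (k + 1))

lemma coeff_comp_C_mul_X (p : ℂ[X]) (c : ℂ) (n : ℕ) :
    (p.comp (C c * X)).coeff n = c ^ n * p.coeff n := by
  induction p using Polynomial.induction_on' with
  | add p q hp hq => simp [add_comp, hp, hq, mul_add]
  | monomial i a =>
      rw [monomial_comp, mul_pow, ← C_pow, ← mul_assoc, ← C_mul, C_mul_X_pow_eq_monomial,
        coeff_monomial, coeff_monomial]
      split_ifs with h
      · subst h; ring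
      · ring

lemma key : ∀ k : ℕ, ((P k).map (algebraMap ℝ ℂ)).comp (C (-Complex.I) * X)
    = C (Complex.I ^ (k - 1)) * (Q k).map (algebraMap ℝ ℂ)
  | 0 => by simp [P, Q]
  | 1 => by simp [P, Q]
  | (k + 2) => by
    have ih := key (k + 1)
    rw [show (k : ℕ) + 1 - 1 = k from rfl] at ih
    have hderiv : ((derivative (P (k + 1))).map (algebraMap ℝ ℂ)).comp (C (-Complex.I) * X)
        = C Complex.I * (C (Complex.I ^ k) * (derivative (Q (k + 1))).map (algebraMap ℝ ℂ)) := by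
      have h2 := congrArg derivative ih
      rw [derivative_comp, derivative_mul, derivative_C, zero_mul, zero_add] at h2
      simp only [derivative_map, derivative_mul, derivative_C, derivative_X, zero_mul, zero_add,
        mul_one] at h2
      have h3 := congrArg (fun p => C Complex.I * p) h2
      simp only [← mul_assoc, ← C_mul] at h3
      rw [show Complex.I * -Complex.I = 1 by simp [Complex.I_mul_I]] at h3
      simp only [C_1, one_mul] at h3
      rw [h3]
      simp only [← mul_assoc, ← C_mul]
    show ((C (1 - 2 * ((k : ℝ) + 1)) * X * P (k + 1)
        + (1 + X ^ 2) * derivative (P (k + 1))).map (algebraMap ℝ ℂ)).comp (C (-Complex.I) * X)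
      = C (Complex.I ^ (k + 1)) * (C (2 * ((k : ℝ) + 1) - 1) * X * Q (k + 1)
        + (1 - X ^ 2) * derivative (Q (k + 1))).map (algebraMap ℝ ℂ)
    simp only [Polynomial.map_add, Polynomial.map_mul, Polynomial.map_one, Polynomial.map_pow,
      map_C, map_X, Polynomial.map_sub, add_comp, mul_comp, C_comp, X_comp, one_comp, pow_comp,
      hderiv]
    rw [ih]
    apply Polynomial.funext
    intro x
    simp only [eval_add, eval_mul, eval_sub, eval_pow, eval_C, eval_X, eval_one,
      Complex.coe_algebraMap]
    push_cast
    linear_combination (Complex.I ^ (k + 1)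
      * eval x ((derivative (Q (k + 1))).map (algebraMap ℝ ℂ)) * x ^ 2) * Complex.I_sq

lemma Q_coeff_zero : ∀ k j, k ≤ j → (Q k).coeff j = 0
  | 0, j, _ => by simp [Q]
  | 1, j, hj => by
    rw [show Q 1 = 1 from rfl, coeff_one, if_neg (by omega)]
  | (k + 2), j, hj => by
    obtain ⟨m, rfl⟩ : ∃ m, j = m + 2 := ⟨j - 2, by omega⟩
    have hQ : Q (k + 2) = C (2 * ((k : ℝ) + 1) - 1) * X * Q (k + 1)
        + (1 - X ^ 2) * derivative (Q (k + 1)) := rfl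
    rw [hQ, sub_mul, one_mul, coeff_add, coeff_sub, mul_assoc, coeff_C_mul, coeff_X_mul,
      Q_coeff_zero (k + 1) (m + 1) (by omega), coeff_X_pow_mul (derivative (Q (k+1))) 2 m,
      coeff_derivative, coeff_derivative, Q_coeff_zero (k + 1) (m + 2 + 1) (by omega),
      Q_coeff_zero (k + 1) (m + 1) (by omega)]
    ring

lemma Q_coeff_rec (k m : ℕ) : (Q (k + 2)).coeff (m + 2)
    = (2 * ((k : ℝ) + 1) - 1 - (m + 1)) * (Q (k + 1)).coeff (m + 1)
      + (m + 3) * (Q (k + 1)).coeff (m + 3) := by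
  have hQ : Q (k + 2) = C (2 * ((k : ℝ) + 1) - 1) * X * Q (k + 1)
      + (1 - X ^ 2) * derivative (Q (k + 1)) := rfl
  rw [hQ, sub_mul, one_mul, coeff_add, coeff_sub, mul_assoc, coeff_C_mul, coeff_X_mul,
    coeff_X_pow_mul (derivative (Q (k + 1))) 2 m, coeff_derivative, coeff_derivative]
  push_cast
  ring

lemma Q_coeff_zero' (k : ℕ) : (Q (k + 2)).coeff 0 = (Q (k + 1)).coeff 1 := by
  have hQ : Q (k + 2) = C (2 * ((k : ℝ) + 1) - 1) * X * Q (k + 1)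
      + (1 - X ^ 2) * derivative (Q (k + 1)) := rfl
  rw [hQ, sub_mul, one_mul, coeff_add, coeff_sub, mul_assoc, coeff_C_mul, mul_coeff_zero,
    coeff_X_zero, zero_mul, mul_zero, mul_coeff_zero, coeff_X_pow, if_neg (by norm_num),
    zero_mul, coeff_derivative]
  push_cast
  ring

lemma Q_coeff_one (k : ℕ) : (Q (k + 2)).coeff 1
    = (2 * ((k : ℝ) + 1) - 1) * (Q (k + 1)).coeff 0 + 2 * (Q (k + 1)).coeff 2 := by
  have hQ : Q (k + 2) = C (2 * ((k : ℝ) + 1) - 1) * X * Q (k + 1)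
      + (1 - X ^ 2) * derivative (Q (k + 1)) := rfl
  have hx2 : ((X : ℝ[X]) ^ 2 * derivative (Q (k + 1))).coeff 1 = 0 := by
    rw [show ((X : ℝ[X]) ^ 2) = X * X by ring, mul_assoc, coeff_X_mul, mul_coeff_zero,
      coeff_X_zero, zero_mul]
  rw [hQ, sub_mul, one_mul, coeff_add, coeff_sub, mul_assoc, coeff_C_mul, coeff_X_mul, hx2,
    coeff_derivative]
  push_cast
  ring

lemma Q_coeff_nonneg : ∀ k j, 0 ≤ (Q k).coeff j
  | 0, j => by simp [Q]
  | 1, j => by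
    rw [show Q 1 = 1 from rfl, coeff_one]
    split <;> norm_num
  | (k + 2), 0 => by
    rw [Q_coeff_zero' k]
    exact Q_coeff_nonneg (k + 1) 1
  | (k + 2), 1 => by
    rw [Q_coeff_one k]
    have h1 := Q_coeff_nonneg (k + 1) 0
    have h2 := Q_coeff_nonneg (k + 1) 2
    have hk : (0 : ℝ) ≤ (k : ℝ) := Nat.cast_nonneg k
    refine add_nonneg (mul_nonneg (by linarith) h1) (mul_nonneg (by norm_num) h2)
  | (k + 2), (m + 2) => by
    rw [Q_coeff_rec k m]
    have h3 := Q_coeff_nonneg (k + 1) (m + 3)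
    rcases le_or_gt (k + 1) (m + 1) with h | h
    · rw [Q_coeff_zero (k + 1) (m + 1) h, mul_zero, zero_add]
      exact mul_nonneg (by positivity) h3
    · have h1 := Q_coeff_nonneg (k + 1) (m + 1)
      have hm : (m : ℝ) + 1 ≤ k := by exact_mod_cast Nat.lt_succ_iff.mp h
      have : (0 : ℝ) ≤ 2 * ((k : ℝ) + 1) - 1 - (m + 1) := by linarith
      exact add_nonneg (mul_nonneg this h1) (mul_nonneg (by positivity) h3)

lemma Q_eval_one : ∀ k : ℕ, (Q (k + 2)).eval 1 = (Nat.doubleFactorial (2 * (k + 2) - 3) : ℝ)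
  | 0 => by
    have hQ : Q 2 = C (2 * ((0 : ℕ) + 1 : ℝ) - 1) * X * Q 1 + (1 - X ^ 2) * derivative (Q 1) :=
      rfl
    rw [hQ, show Q 1 = 1 from rfl]
    norm_num [Nat.doubleFactorial]
  | (k + 1) => by
    have ih := Q_eval_one k
    have hQ : Q (k + 1 + 2) = C (2 * (((k + 1 : ℕ) : ℝ) + 1) - 1) * X * Q (k + 2)
        + (1 - X ^ 2) * derivative (Q (k + 2)) := rfl
    rw [hQ, show 2 * (k + 1 + 2) - 3 = 2 * k + 1 + 2 by omega, Nat.doubleFactorial_add_two,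
      show 2 * (k + 2) - 3 = 2 * k + 1 by omega] at *
    simp only [eval_add, eval_mul, eval_sub, eval_pow, eval_C, eval_X, eval_one, ih]
    push_cast
    ring

/-- Lemma 2.1: for `k ≥ 2`, the sum of the absolute values of the coefficients of
`P_k` equals the double factorial `(2k-3)!! = 1·3·5···(2k-3)`. -/
theorem P_coeff_abs_sum (k : ℕ) (hk : 2 ≤ k) :
    ∑ i ∈ Finset.range k, |(P k).coeff i| = (Nat.doubleFactorial (2 * k - 3) : ℝ) := by
  have habs : ∀ i, |(P k).coeff i| = (Q k).coeff i := by
    intro i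
    have h := congrArg (fun p => ‖p.coeff i‖) (key k)
    simp only [coeff_comp_C_mul_X, coeff_map, coeff_C_mul, Complex.coe_algebraMap] at h
    rw [norm_mul, norm_mul, norm_pow, norm_pow, norm_neg, Complex.norm_I,
      Complex.norm_real, Complex.norm_real, one_pow, one_pow, one_mul, one_mul,
      Real.norm_eq_abs, Real.norm_eq_abs] at h
    rw [h, abs_of_nonneg (Q_coeff_nonneg k i)]
  simp_rw [habs]
  obtain ⟨m, rfl⟩ : ∃ m, k = m + 2 := ⟨k - 2, by omega⟩
  rw [← Q_eval_one m]
  by_cases h0 : Q (m + 2) = 0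
  · simp [h0]
  · have hdeg : (Q (m + 2)).natDegree < m + 2 := by
      by_contra hle
      push_neg at hle
      exact h0 (Polynomial.leadingCoeff_eq_zero.mp (Q_coeff_zero _ _ hle))
    rw [Polynomial.eval_eq_sum_range' hdeg]
    simp
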